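/- (Lemma 4) For every intervention ξ with respect to an initial statistics p⁰ on a finite type set Ω closed under threshold reduction, and for every z ∈ [0,1], the derivative of z ↦ φ_{p(ξ)}(z) − z satisfies |(d/dz)(φ_{p(ξ)}(z) − z)| ≤ d_max · 2^{k_max + 1} · k_max / ⟨p⁰,d⟩ + 1, where d_max = max_{w∈Ω} d_w and k_max = max_{w∈Ω} k_w. -/

import Mathlib

/-- `φ_{k,r}(z) = ∑_{u=r}^{k} (k choose u) z^u (1-z)^{k-u}`. -/
def phiKR (k r : ℕ) (z : ℝ) : ℝ :=
  ∑ u ∈ Finset.Icc r k, (k.choose u : ℝ) * z ^ u * (1 - z) ^ (k - u)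

/-- `φ_p(z) = ⟨p,d⟩⁻¹ ∑_w p_w d_w φ_{k_w, r_w}(z)`. -/
noncomputable def phiP {Ω : Type*} [Fintype Ω] (d k r : Ω → ℕ) (p : Ω → ℝ) (z : ℝ) : ℝ :=
  (∑ w, p w * (d w : ℝ))⁻¹ * ∑ w, p w * (d w : ℝ) * phiKR (k w) (r w) z

/-- The post-intervention statistics `p(ξ)`. -/
def postP {Ω : Type*} [Fintype Ω] [DecidableEq Ω] (down : Ω → ℕ → Ω)
    (r : Ω → ℕ) (ξ : Ω → ℕ → ℝ) : Ω → ℝ :=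
  fun w => ∑ w', ∑ η ∈ Finset.range (r w' + 1), if down w' η = w then ξ w' η else 0

/-- (Lemma 4) For every intervention `ξ`, the derivative of
`z ↦ φ_{p(ξ)}(z) − z` is bounded on `[0,1]` by
`d_max 2^{k_max+1} k_max / ⟨p⁰,d⟩ + 1`. -/
noncomputable def phiKR' (k r : ℕ) (z : ℝ) : ℝ :=
  ∑ u ∈ Finset.Icc r k, (k.choose u : ℝ) *
    ((u : ℝ) * z ^ (u - 1) * (1 - z) ^ (k - u)
      - z ^ u * ((k - u : ℕ) * (1 - z) ^ (k - u - 1)))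

lemma hasDerivAt_phiKR (k r : ℕ) (z : ℝ) :
    HasDerivAt (phiKR k r) (phiKR' k r z) z := by
  unfold phiKR phiKR'
  apply HasDerivAt.fun_sum
  intro u _
  have h1 : HasDerivAt (fun z : ℝ => z ^ u) ((u : ℝ) * z ^ (u - 1)) z := hasDerivAt_pow u z
  have h0 : HasDerivAt (fun x : ℝ => 1 - x) (-1) z := by
    simpa using (hasDerivAt_id z).const_sub (1:ℝ)
  have h2 : HasDerivAt (fun z : ℝ => (1 - z) ^ (k - u))
      (((k - u : ℕ) : ℝ) * (1 - z) ^ (k - u - 1) * (-1)) z :=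
    (hasDerivAt_pow (k - u) (1 - z)).comp z h0
  have := (h1.fun_mul h2).const_mul ((k.choose u : ℝ))
  convert this using 1
  · ext y; ring
  · ring
  · ring

lemma abs_phiKR'_le (k r : ℕ) (hrk : r ≤ k) {z : ℝ} (hz : z ∈ Set.Icc (0:ℝ) 1) :
    |phiKR' k r z| ≤ (k : ℝ) * 2 ^ k := by
  obtain ⟨hz0, hz1⟩ := hz
  have hz1' : 0 ≤ 1 - z := by linarith
  have hpow : ∀ (a b : ℕ), z ^ a * (1 - z) ^ b ≤ 1 := by
    intro a b
    exact mul_le_one₀ (pow_le_one₀ hz0 hz1) (pow_nonneg hz1' b) (pow_le_one₀ hz1' (by linarith))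
  have key : ∀ u ∈ Finset.Icc r k,
      |(k.choose u : ℝ) * ((u : ℝ) * z ^ (u - 1) * (1 - z) ^ (k - u)
        - z ^ u * ((k - u : ℕ) * (1 - z) ^ (k - u - 1)))| ≤ (k.choose u : ℝ) * k := by
    intro u hu
    rw [Finset.mem_Icc] at hu
    rw [abs_mul, abs_of_nonneg (by positivity : (0:ℝ) ≤ (k.choose u : ℝ))]
    apply mul_le_mul_of_nonneg_left _ (by positivity)
    have hA : |(u : ℝ) * z ^ (u - 1) * (1 - z) ^ (k - u)| ≤ (u : ℝ) := by
      rw [abs_of_nonneg (by positivity)]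
      have := hpow (u - 1) (k - u)
      calc (u : ℝ) * z ^ (u - 1) * (1 - z) ^ (k - u)
          = (u : ℝ) * (z ^ (u - 1) * (1 - z) ^ (k - u)) := by ring
        _ ≤ (u : ℝ) * 1 := by apply mul_le_mul_of_nonneg_left this (by positivity)
        _ = u := by ring
    have hB : |z ^ u * ((k - u : ℕ) * (1 - z) ^ (k - u - 1))| ≤ ((k - u : ℕ) : ℝ) := by
      rw [abs_of_nonneg (by positivity)]
      have := hpow u (k - u - 1)
      calc z ^ u * ((k - u : ℕ) * (1 - z) ^ (k - u - 1))
          = ((k - u : ℕ) : ℝ) * (z ^ u * (1 - z) ^ (k - u - 1)) := by ring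
        _ ≤ ((k - u : ℕ) : ℝ) * 1 := by apply mul_le_mul_of_nonneg_left this (by positivity)
        _ = _ := by ring
    calc |_ - _| ≤ |(u : ℝ) * z ^ (u - 1) * (1 - z) ^ (k - u)|
          + |z ^ u * ((k - u : ℕ) * (1 - z) ^ (k - u - 1))| := abs_sub _ _
      _ ≤ (u : ℝ) + ((k - u : ℕ) : ℝ) := add_le_add hA hB
      _ = (k : ℝ) := by
          rw [← Nat.cast_add]
          congr 1
          omega
  calc |phiKR' k r z| ≤ ∑ u ∈ Finset.Icc r k,
        |(k.choose u : ℝ) * ((u : ℝ) * z ^ (u - 1) * (1 - z) ^ (k - u)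
          - z ^ u * ((k - u : ℕ) * (1 - z) ^ (k - u - 1)))| := Finset.abs_sum_le_sum_abs _ _
    _ ≤ ∑ u ∈ Finset.Icc r k, (k.choose u : ℝ) * k := Finset.sum_le_sum key
    _ = (∑ u ∈ Finset.Icc r k, (k.choose u : ℝ)) * k := by rw [← Finset.sum_mul]
    _ ≤ (∑ u ∈ Finset.range (k + 1), (k.choose u : ℝ)) * k := by
        apply mul_le_mul_of_nonneg_right _ (by positivity)
        apply Finset.sum_le_sum_of_subset_of_nonneg
        · intro x hx
          rw [Finset.mem_Icc] at hx
          rw [Finset.mem_range]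
          omega
        · intros; positivity
    _ = (2 ^ k : ℝ) * k := by
        norm_cast
        rw [Nat.sum_range_choose]
    _ = (k : ℝ) * 2 ^ k := by ring

theorem abs_deriv_phiP_post_sub_id_le
    {Ω : Type*} [Fintype Ω] [Nonempty Ω] [DecidableEq Ω]
    (d k r : Ω → ℕ) (down : Ω → ℕ → Ω)
    (hd : ∀ w, 1 ≤ d w) (hrk : ∀ w, r w ≤ k w)
    (hinj : Function.Injective fun w => (d w, k w, r w))
    (hdown : ∀ w, ∀ j ≤ r w,
      d (down w j) = d w ∧ k (down w j) = k w ∧ r (down w j) = r w - j)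
    (p0 : Ω → ℝ) (hp00 : ∀ w, 0 ≤ p0 w) (hp01 : ∀ w, p0 w ≤ 1)
    (hp0sum : ∑ w, p0 w = 1)
    (ξ : Ω → ℕ → ℝ)
    (hξ0 : ∀ w η, 0 ≤ ξ w η) (hξ1 : ∀ w η, ξ w η ≤ 1)
    (hξsupp : ∀ w η, r w < η → ξ w η = 0)
    (hξsum : ∀ w, ∑ η ∈ Finset.range (r w + 1), ξ w η = p0 w)
    (dmax kmax : ℕ)
    (hdmax : dmax = Finset.univ.sup' Finset.univ_nonempty d)
    (hkmax : kmax = Finset.univ.sup' Finset.univ_nonempty k) :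
    ∀ z ∈ Set.Icc (0 : ℝ) 1,
      |deriv (fun z => phiP d k r (postP down r ξ) z - z) z| ≤
        (dmax : ℝ) * 2 ^ (kmax + 1) * (kmax : ℝ) / (∑ w, p0 w * (d w : ℝ)) + 1 := by
  intro z hz
  set q := postP down r ξ with hq
  set S : ℝ := ∑ w, p0 w * (d w : ℝ) with hSdef
  -- q is nonnegative
  have hq0 : ∀ w, 0 ≤ q w := by
    intro w
    apply Finset.sum_nonneg
    intro w' _
    apply Finset.sum_nonneg
    intro η _
    split <;> [exact hξ0 w' η; exact le_refl 0]
  -- sum of q d equals S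
  have hqd : ∑ w, q w * (d w : ℝ) = S := by
    rw [hSdef]
    simp only [hq, postP, Finset.sum_mul]
    rw [Finset.sum_comm]
    apply Finset.sum_congr rfl
    intro w' _
    rw [Finset.sum_comm]
    have : ∀ η ∈ Finset.range (r w' + 1),
        (∑ w, (if down w' η = w then ξ w' η else 0) * (d w : ℝ))
          = ξ w' η * (d w' : ℝ) := by
      intro η hη
      rw [Finset.mem_range] at hη
      have hdd : d (down w' η) = d w' := (hdown w' η (by omega)).1
      rw [Finset.sum_eq_single (down w' η)]
      · simp [hdd]
      · intro b _ hb
        simp [Ne.symm hb]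
      · simp
    rw [Finset.sum_congr rfl this, ← Finset.sum_mul, hξsum]
  -- bounds on S
  have hS1 : (1 : ℝ) ≤ S := by
    rw [hSdef, ← hp0sum]
    apply Finset.sum_le_sum
    intro w _
    nlinarith [hp00 w, (Nat.one_le_cast (α := ℝ)).mpr (hd w)]
  have hS0 : (0 : ℝ) < S := lt_of_lt_of_le one_pos hS1
  have hdle : ∀ w, (d w : ℝ) ≤ dmax := by
    intro w
    exact_mod_cast Nat.cast_le.mpr (hdmax ▸ Finset.le_sup' d (Finset.mem_univ w))
  have hkle : ∀ w, k w ≤ kmax := fun w => hkmax ▸ Finset.le_sup' k (Finset.mem_univ w)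
  have hSd : S ≤ (dmax : ℝ) := by
    rw [hSdef]
    calc ∑ w, p0 w * (d w : ℝ) ≤ ∑ w, p0 w * (dmax : ℝ) := by
          apply Finset.sum_le_sum
          intro w _
          exact mul_le_mul_of_nonneg_left (hdle w) (hp00 w)
      _ = (dmax : ℝ) := by rw [← Finset.sum_mul, hp0sum, one_mul]
  -- derivative
  set D : ℝ := (∑ w, q w * (d w : ℝ))⁻¹ * ∑ w, q w * (d w : ℝ) * phiKR' (k w) (r w) z with hD
  have hderiv : HasDerivAt (fun z => phiP d k r q z - z) (D - 1) z := by
    have h1 : HasDerivAt (fun z => phiP d k r q z) D z := by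
      unfold phiP
      exact (HasDerivAt.fun_sum fun w _ =>
        (hasDerivAt_phiKR (k w) (r w) z).const_mul (q w * (d w : ℝ))).const_mul _
    simpa using h1.fun_sub (hasDerivAt_id z)
  rw [hderiv.deriv]
  -- bound K on the derivative of each phiKR
  set K : ℝ := (kmax : ℝ) * 2 ^ kmax with hK
  have hK0 : 0 ≤ K := by positivity
  have hDbound : |D| ≤ K := by
    rw [hD, hqd, abs_mul, abs_of_nonneg (inv_nonneg.mpr hS0.le)]
    have hTle : |∑ w, q w * (d w : ℝ) * phiKR' (k w) (r w) z| ≤ S * K := by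
      calc |∑ w, q w * (d w : ℝ) * phiKR' (k w) (r w) z|
          ≤ ∑ w, |q w * (d w : ℝ) * phiKR' (k w) (r w) z| := Finset.abs_sum_le_sum_abs _ _
        _ ≤ ∑ w, q w * (d w : ℝ) * K := by
            apply Finset.sum_le_sum
            intro w _
            rw [abs_mul, abs_of_nonneg (mul_nonneg (hq0 w) (Nat.cast_nonneg _))]
            apply mul_le_mul_of_nonneg_left _ (mul_nonneg (hq0 w) (Nat.cast_nonneg _))
            calc |phiKR' (k w) (r w) z| ≤ (k w : ℝ) * 2 ^ (k w) :=
                abs_phiKR'_le (k w) (r w) (hrk w) hz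
              _ ≤ K := by
                  rw [hK]
                  apply mul_le_mul (by exact_mod_cast hkle w)
                    (pow_le_pow_right₀ one_le_two (hkle w)) (by positivity)
                    (Nat.cast_nonneg kmax)
        _ = S * K := by rw [← Finset.sum_mul, hqd]
    calc S⁻¹ * |∑ w, q w * (d w : ℝ) * phiKR' (k w) (r w) z|
        ≤ S⁻¹ * (S * K) := mul_le_mul_of_nonneg_left hTle (inv_nonneg.mpr hS0.le)
      _ = K := by field_simp
  -- conclude
  have habs : |D - 1| ≤ |D| + 1 := by
    calc |D - 1| ≤ |D| + |(1:ℝ)| := abs_sub D 1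
      _ = |D| + 1 := by norm_num
  refine le_trans habs ?_
  have hKfin : K ≤ (dmax : ℝ) * 2 ^ (kmax + 1) * (kmax : ℝ) / S := by
    rw [le_div_iff₀ hS0, hK]
    have h2 : (2:ℝ) ^ (kmax + 1) = 2 * 2 ^ kmax := by rw [pow_succ]; ring
    rw [h2]
    have hd1 : (1:ℝ) ≤ (dmax : ℝ) := le_trans hS1 hSd
    nlinarith [pow_pos (by norm_num : (0:ℝ) < 2) kmax, Nat.cast_nonneg (α := ℝ) kmax,
      mul_le_mul_of_nonneg_left hSd hK0]
  linarith [hDbound]
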